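/- arXiv:1909.10230 — 2 statements merged into one kernel-verified Lean document; each statement's English description precedes it below -/
import Mathlib

section
/- Let d ≥ 2 and let q > 2 be a real number. Let f, g ∈ L²(𝕊^{d−1}) with f not almost everywhere zero. If ∫_{ℝ^d} |\widehat{fσ}(z)|^{q−2} |\widehat{gσ}(z)|² dz = 0, then g = 0 almost everywhere on 𝕊^{d−1}. (In particular, for 2(d+1)/(d−1) ≤ q < ∞ the quadratic form g ↦ ∫_{ℝ^d} |\widehat{fσ}|^{q−2} |\widehat{gσ}|² dz associated to the operator T_f is positive definite.) -/
open MeasureTheory Metric Real Complex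

noncomputable section

/-- The unit sphere `𝕊^{d-1} ⊂ ℝ^d`. -/
abbrev Sph (d : ℕ) := Metric.sphere (0 : EuclideanSpace ℝ (Fin d)) 1

/-- The (unnormalized) surface measure `σ_{d-1}` on the unit sphere,
with total mass `ω_{d-1} = 2 π^(d/2) / Γ(d/2)`. -/
def sphMeasure (d : ℕ) : Measure (Sph d) :=
  (volume : Measure (EuclideanSpace ℝ (Fin d))).toSphere

/-- The extension operator `\widehat{fσ}(x) = ∫_{𝕊^{d-1}} f(ω) e^{-i x·ω} dσ_{d-1}(ω)`. -/
def extOp (d : ℕ) (f : Sph d → ℂ) (x : EuclideanSpace ℝ (Fin d)) : ℂ :=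
  ∫ ω, f ω * Complex.exp (-(Complex.I * ((inner ℝ x (ω : EuclideanSpace ℝ (Fin d)) : ℝ) : ℂ)))
    ∂(sphMeasure d)

/-- The Tomas–Stein functional `Φ_{d,q}(f) = ‖\widehat{fσ}‖_{L^q(ℝ^d)}^q / ‖f‖_{L²(𝕊^{d-1})}^q`. -/
def PhiTS (d : ℕ) (q : ℝ) (f : Sph d → ℂ) : ℝ :=
  (∫ x, ‖extOp d f x‖ ^ q ∂(volume : Measure (EuclideanSpace ℝ (Fin d)))) /
    (∫ ω, ‖f ω‖ ^ (2 : ℝ) ∂(sphMeasure d)) ^ (q / 2)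

/-- `f` is a maximizer of `Φ_{d,q}`: a nonzero element of `L²(𝕊^{d-1})` at which the
supremum of `Φ_{d,q}` over nonzero `L²` functions is attained. -/
def IsMaximizer (d : ℕ) (q : ℝ) (f : Sph d → ℂ) : Prop :=
  MemLp f 2 (sphMeasure d) ∧ ¬ f =ᵐ[sphMeasure d] 0 ∧
    ∀ g : Sph d → ℂ, MemLp g 2 (sphMeasure d) → ¬ g =ᵐ[sphMeasure d] 0 →
      PhiTS d q g ≤ PhiTS d q f

end

noncomputable section Aux

abbrev Eucl (d : ℕ) := EuclideanSpace ℝ (Fin d)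

variable {d : ℕ}

lemma norm_coe_sphere (ω : Sph d) : ‖(ω : Eucl d)‖ = 1 := by
  have h := ω.2
  rwa [mem_sphere_zero_iff_norm] at h

/-- The characters `ω ↦ e^{-i ξ·ω}` as continuous maps on the sphere. -/
def sphChar (d : ℕ) (ξ : Eucl d) : C(Sph d, ℂ) :=
  ⟨fun ω => Complex.exp (-(Complex.I * ((inner ℝ ξ (ω : Eucl d) : ℝ) : ℂ))), by
    have h1 : Continuous fun ω : Sph d => (inner ℝ ξ (ω : Eucl d) : ℝ) :=
      continuous_const.inner continuous_subtype_val
    exact Complex.continuous_exp.comp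
      ((continuous_const.mul (Complex.continuous_ofReal.comp h1)).neg)⟩

lemma sphChar_apply (ξ : Eucl d) (ω : Sph d) :
    sphChar d ξ ω = Complex.exp (-(Complex.I * ((inner ℝ ξ (ω : Eucl d) : ℝ) : ℂ))) := rfl

lemma sphChar_mul (ξ ξ' : Eucl d) : sphChar d ξ * sphChar d ξ' = sphChar d (ξ + ξ') := by
  ext ω
  simp only [ContinuousMap.mul_apply, sphChar_apply, ← Complex.exp_add]
  congr 1
  have h : (inner ℝ (ξ + ξ') (ω : Eucl d) : ℝ)
      = (inner ℝ ξ (ω : Eucl d) : ℝ) + (inner ℝ ξ' (ω : Eucl d) : ℝ) := inner_add_left _ _ _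
  rw [h]
  push_cast
  ring

lemma sphChar_zero : sphChar d 0 = 1 := by
  ext ω
  simp [sphChar_apply]

lemma sphChar_star (ξ : Eucl d) : star (sphChar d ξ) = sphChar d (-ξ) := by
  ext ω
  simp only [ContinuousMap.star_apply, sphChar_apply]
  rw [RCLike.star_def, ← Complex.exp_conj]
  congr 1
  have h : (inner ℝ (-ξ) (ω : Eucl d) : ℝ) = -(inner ℝ ξ (ω : Eucl d) : ℝ) := inner_neg_left _ _
  rw [h]
  simp [map_mul, Complex.conj_I]

def sphSpan (d : ℕ) : Submodule ℂ C(Sph d, ℂ) := Submodule.span ℂ (Set.range (sphChar d))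

lemma sphSpan_mul_mem {a b : C(Sph d, ℂ)} (ha : a ∈ sphSpan d) (hb : b ∈ sphSpan d) :
    a * b ∈ sphSpan d := by
  refine Submodule.span_induction (p := fun a _ => a * b ∈ sphSpan d) ?_ ?_ ?_ ?_ ha
  · rintro x ⟨ξ, rfl⟩
    refine Submodule.span_induction (p := fun b _ => sphChar d ξ * b ∈ sphSpan d) ?_ ?_ ?_ ?_ hb
    · rintro y ⟨ξ', rfl⟩
      rw [sphChar_mul]
      exact Submodule.subset_span ⟨_, rfl⟩
    · show sphChar d ξ * (0 : C(Sph d, ℂ)) ∈ sphSpan d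
      rw [mul_zero]; exact zero_mem _
    · intro u v _ _ hu hv
      show sphChar d ξ * (u + v) ∈ sphSpan d
      rw [mul_add]; exact add_mem hu hv
    · intro c u _ hu
      show sphChar d ξ * (c • u) ∈ sphSpan d
      rw [mul_smul_comm]; exact Submodule.smul_mem _ _ hu
  · show (0 : C(Sph d, ℂ)) * b ∈ sphSpan d
    rw [zero_mul]; exact zero_mem _
  · intro u v _ _ hu hv
    show (u + v) * b ∈ sphSpan d
    rw [add_mul]; exact add_mem hu hv
  · intro c u _ hu
    show (c • u) * b ∈ sphSpan d
    rw [smul_mul_assoc]; exact Submodule.smul_mem _ _ hu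

lemma one_mem_sphSpan : (1 : C(Sph d, ℂ)) ∈ sphSpan d := by
  rw [← sphChar_zero]; exact Submodule.subset_span ⟨0, rfl⟩

/-- The star subalgebra of `C(𝕊^{d-1}, ℂ)` spanned by the characters. -/
def sphAlg (d : ℕ) : StarSubalgebra ℂ C(Sph d, ℂ) where
  carrier := sphSpan d
  mul_mem' := fun ha hb => sphSpan_mul_mem ha hb
  add_mem' := fun ha hb => add_mem ha hb
  one_mem' := one_mem_sphSpan
  zero_mem' := zero_mem _
  algebraMap_mem' := fun c => by
    have h1 : (algebraMap ℂ C(Sph d, ℂ)) c = c • (1 : C(Sph d, ℂ)) :=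
      Algebra.algebraMap_eq_smul_one c
    rw [h1]
    exact Submodule.smul_mem _ _ one_mem_sphSpan
  star_mem' := fun {a} ha => by
    refine Submodule.span_induction (p := fun a _ => star a ∈ sphSpan d) ?_ ?_ ?_ ?_ ha
    · rintro x ⟨ξ, rfl⟩
      rw [sphChar_star]
      exact Submodule.subset_span ⟨_, rfl⟩
    · show star (0 : C(Sph d, ℂ)) ∈ sphSpan d
      rw [star_zero]; exact zero_mem _
    · intro u v _ _ hu hv
      show star (u + v) ∈ sphSpan d
      rw [star_add]; exact add_mem hu hv
    · intro c u _ hu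
      show star (c • u) ∈ sphSpan d
      rw [star_smul]; exact Submodule.smul_mem _ _ hu

lemma mem_sphAlg_iff {a : C(Sph d, ℂ)} : a ∈ sphAlg d ↔ a ∈ sphSpan d := Iff.rfl

lemma sphAlg_separates (d : ℕ) : (sphAlg d).toSubalgebra.SeparatesPoints := by
  intro ω₁ ω₂ hne
  set v : Eucl d := (ω₁ : Eucl d) - (ω₂ : Eucl d) with hv
  have hvne : v ≠ 0 := sub_ne_zero.mpr (fun hc => hne (Subtype.coe_injective hc))
  refine ⟨_, ⟨sphChar d v, Submodule.subset_span ⟨v, rfl⟩, rfl⟩, ?_⟩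
  show sphChar d v ω₁ ≠ sphChar d v ω₂
  intro heq
  rw [sphChar_apply, sphChar_apply] at heq
  set a : ℝ := (inner ℝ v ((ω₁ : Eucl d)) : ℝ) with hadef
  set b : ℝ := (inner ℝ v ((ω₂ : Eucl d)) : ℝ) with hbdef
  have hab : a - b = ‖v‖ ^ 2 := by
    rw [hadef, hbdef, ← inner_sub_right, ← hv, real_inner_self_eq_norm_sq]
  obtain ⟨n, hn⟩ := Complex.exp_eq_exp_iff_exists_int.mp heq
  -- -(I a) = -(I b) + n (2 π I)  ⇒  a - b = -2πn
  have hreal : (a : ℂ) - b = -(2 * Real.pi * n) := by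
    have h2 : Complex.I * ((a : ℂ) - b) = Complex.I * (-(2 * Real.pi * n)) := by
      linear_combination -hn
    exact mul_left_cancel₀ Complex.I_ne_zero h2
  have hreal' : a - b = -(2 * Real.pi * n) := by
    exact_mod_cast hreal
  have hnorm2pos : 0 < ‖v‖ ^ 2 := pow_pos (norm_pos_iff.mpr hvne) 2
  have hnormle : ‖v‖ ≤ 2 := by
    calc ‖v‖ ≤ ‖(ω₁ : Eucl d)‖ + ‖(ω₂ : Eucl d)‖ := norm_sub_le _ _
    _ = 2 := by rw [norm_coe_sphere, norm_coe_sphere]; norm_num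
  have hsq : ‖v‖ ^ 2 ≤ 4 := by nlinarith [norm_nonneg v]
  rw [hab] at hreal'
  have hpi := Real.pi_gt_three
  have hn0 : (n : ℝ) < 0 := by nlinarith
  have hnz : n < 0 := by exact_mod_cast hn0
  have hn1' : n ≤ -1 := by omega
  have hn1 : (n : ℝ) ≤ -1 := by exact_mod_cast hn1'
  nlinarith

end Aux

noncomputable section Aux2

variable {d : ℕ}

instance : IsFiniteMeasure (sphMeasure d) :=
  inferInstanceAs (IsFiniteMeasure (volume : Measure (Eucl d)).toSphere)

instance : (sphMeasure d).WeaklyRegular :=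
  inferInstanceAs ((volume : Measure (Eucl d)).toSphere).WeaklyRegular

lemma integrable_of_memL2 {h : Sph d → ℂ} (hh : MemLp h 2 (sphMeasure d)) :
    Integrable h (sphMeasure d) :=
  hh.integrable one_le_two

lemma integrable_mul_cmap {h : Sph d → ℂ} (hint : Integrable h (sphMeasure d))
    (φ : C(Sph d, ℂ)) : Integrable (fun ω => h ω * φ ω) (sphMeasure d) := by
  have := hint.bdd_mul (c := ‖φ‖) φ.continuous.aestronglyMeasurable (ae_of_all _ fun x => φ.norm_coe_le_norm x)
  simpa [mul_comm] using this

lemma continuous_extOp {h : Sph d → ℂ} (hint : Integrable h (sphMeasure d)) :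
    Continuous (extOp d h) := by
  have hnorm : ∀ (x : Eucl d) (ω : Sph d),
      ‖Complex.exp (-(Complex.I * ((inner ℝ x (ω : Eucl d) : ℝ) : ℂ)))‖ = 1 := by
    intro x ω
    have e : -(Complex.I * (((inner ℝ x (ω : Eucl d) : ℝ)) : ℂ))
        = ((-(inner ℝ x (ω : Eucl d) : ℝ) : ℝ) : ℂ) * Complex.I := by push_cast; ring
    rw [e, Complex.norm_exp_ofReal_mul_I]
  refine continuous_of_dominated (bound := fun ω => ‖h ω‖) ?_ ?_ hint.norm ?_
  · intro x
    refine hint.1.mul (Continuous.aestronglyMeasurable ?_)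
    exact Complex.continuous_exp.comp
      ((continuous_const.mul (Complex.continuous_ofReal.comp
        (continuous_const.inner continuous_subtype_val))).neg)
  · intro x
    filter_upwards with ω
    rw [norm_mul, hnorm, mul_one]
  · filter_upwards with ω
    refine continuous_const.mul ?_
    exact Complex.continuous_exp.comp
      ((continuous_const.mul (Complex.continuous_ofReal.comp
        (continuous_id.inner continuous_const))).neg)

lemma integral_mul_cmap_zero {h : Sph d → ℂ} (hint : Integrable h (sphMeasure d))
    (hz : ∀ x, extOp d h x = 0) (φ : C(Sph d, ℂ)) :
    ∫ ω, h ω * φ ω ∂(sphMeasure d) = 0 := by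
  set L : C(Sph d, ℂ) → ℂ := fun ψ => ∫ ω, h ω * ψ ω ∂(sphMeasure d) with hLdef
  have hLφ : ∀ ψ : C(Sph d, ℂ), L ψ = ∫ ω, h ω * ψ ω ∂(sphMeasure d) := fun _ => rfl
  -- Lipschitz continuity of L
  have hC : (0:ℝ) ≤ ∫ ω, ‖h ω‖ ∂(sphMeasure d) := integral_nonneg fun ω => norm_nonneg _
  have hlip : LipschitzWith ⟨_, hC⟩ L := by
    refine LipschitzWith.of_dist_le_mul fun ψ₁ ψ₂ => ?_
    have hsub : L ψ₁ - L ψ₂ = ∫ ω, h ω * (ψ₁ ω - ψ₂ ω) ∂(sphMeasure d) := by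
      rw [hLφ, hLφ, ← integral_sub (integrable_mul_cmap hint ψ₁) (integrable_mul_cmap hint ψ₂)]
      refine integral_congr_ae (Filter.Eventually.of_forall fun ω => ?_)
      ring
    rw [dist_eq_norm, hsub]
    calc ‖∫ ω, h ω * (ψ₁ ω - ψ₂ ω) ∂(sphMeasure d)‖
        ≤ ∫ ω, ‖h ω * (ψ₁ ω - ψ₂ ω)‖ ∂(sphMeasure d) := norm_integral_le_integral_norm _
      _ ≤ ∫ ω, ‖h ω‖ * dist ψ₁ ψ₂ ∂(sphMeasure d) := by
          refine integral_mono ((integrable_mul_cmap hint (ψ₁ - ψ₂)).norm.congr ?_)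
            (hint.norm.mul_const _) ?_
          · filter_upwards with ω
            simp [ContinuousMap.sub_apply]
          · intro ω
            show ‖h ω * (ψ₁ ω - ψ₂ ω)‖ ≤ ‖h ω‖ * dist ψ₁ ψ₂
            rw [norm_mul]
            refine mul_le_mul_of_nonneg_left ?_ (norm_nonneg _)
            rw [← dist_eq_norm]
            exact ContinuousMap.dist_apply_le_dist ω
      _ = (∫ ω, ‖h ω‖ ∂(sphMeasure d)) * dist ψ₁ ψ₂ := integral_mul_const _ _
  have hclosed : IsClosed {ψ : C(Sph d, ℂ) | L ψ = 0} :=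
    isClosed_eq hlip.continuous continuous_const
  have hspan : ∀ ψ ∈ sphSpan d, L ψ = 0 := by
    intro ψ hψ
    refine Submodule.span_induction (p := fun ψ _ => L ψ = 0) ?_ ?_ ?_ ?_ hψ
    · rintro x ⟨ξ, rfl⟩
      show L (sphChar d ξ) = 0
      rw [hLφ]
      have := hz ξ
      rw [extOp] at this
      exact this
    · show L 0 = 0
      rw [hLφ]
      simp
    · intro u v _ _ hu hv
      show L (u + v) = 0
      have : L (u + v) = L u + L v := by
        rw [hLφ, hLφ, hLφ, ← integral_add (integrable_mul_cmap hint u) (integrable_mul_cmap hint v)]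
        refine integral_congr_ae (Filter.Eventually.of_forall fun ω => ?_)
        simp [ContinuousMap.add_apply]; ring
      rw [this, hu, hv, add_zero]
    · intro c u _ hu
      show L (c • u) = 0
      have : L (c • u) = c * L u := by
        rw [hLφ, hLφ, ← integral_const_mul]
        refine integral_congr_ae (Filter.Eventually.of_forall fun ω => ?_)
        simp [ContinuousMap.smul_apply]; ring
      rw [this, hu, mul_zero]
  have hdense := ContinuousMap.starSubalgebra_topologicalClosure_eq_top_of_separatesPoints
    (sphAlg d) (sphAlg_separates d)
  have hφcl : φ ∈ closure ((sphSpan d : Set C(Sph d, ℂ))) := by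
    have h1 : φ ∈ (sphAlg d).topologicalClosure := by rw [hdense]; trivial
    exact h1
  have hsubset : (sphSpan d : Set C(Sph d, ℂ)) ⊆ {ψ | L ψ = 0} := fun ψ hψ => hspan ψ hψ
  exact (hclosed.closure_subset_iff.mpr hsubset) hφcl

lemma extOp_zero_ae {h : Sph d → ℂ} (hh : MemLp h 2 (sphMeasure d))
    (hz : ∀ x, extOp d h x = 0) : h =ᵐ[sphMeasure d] 0 := by
  have hint : Integrable h (sphMeasure d) := integrable_of_memL2 hh
  set H : Lp ℂ 2 (sphMeasure d) := hh.toLp h with hHdef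
  have key : ∀ x ∈ (Lp.boundedContinuousFunction ℂ 2 (sphMeasure d) : Set (Lp ℂ 2 (sphMeasure d))),
      (innerSL ℂ H) x = (0 : Lp ℂ 2 (sphMeasure d) →L[ℂ] ℂ) x := by
    intro x hx
    obtain ⟨φ, hφ⟩ := (MeasureTheory.Lp.mem_boundedContinuousFunction_iff).mp hx
    have hxφ : (x : Sph d → ℂ) =ᵐ[sphMeasure d] φ := by
      rw [← hφ]
      exact ContinuousMap.coeFn_toAEEqFun _ _
    rw [innerSL_apply_apply, MeasureTheory.L2.inner_def]
    have hcongr : (fun a => (inner ℂ ((H : Sph d → ℂ) a) ((x : Sph d → ℂ) a) : ℂ))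
        =ᵐ[sphMeasure d] fun a => (starRingEnd ℂ) (h a) * φ a := by
      filter_upwards [hh.coeFn_toLp, hxφ] with a ha hb
      rw [RCLike.inner_apply, ha, hb, mul_comm]
    rw [integral_congr_ae hcongr]
    have hstar : ∫ ω, h ω * (star φ.toContinuousMap) ω ∂(sphMeasure d) = 0 :=
      integral_mul_cmap_zero hint hz (star φ.toContinuousMap)
    have : ∫ a, (starRingEnd ℂ) (h a) * φ a ∂(sphMeasure d)
        = (starRingEnd ℂ) (∫ ω, h ω * (star φ.toContinuousMap) ω ∂(sphMeasure d)) := by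
      rw [← integral_conj]
      refine integral_congr_ae (Filter.Eventually.of_forall fun ω => ?_)
      simp [ContinuousMap.star_apply]
    rw [this, hstar, map_zero]
    rfl
  have hdense : Dense (Submodule.span ℂ
      (Lp.boundedContinuousFunction ℂ 2 (sphMeasure d) : Set (Lp ℂ 2 (sphMeasure d))) :
        Set (Lp ℂ 2 (sphMeasure d))) := by
    have h1 : Dense (Lp.boundedContinuousFunction ℂ 2 (sphMeasure d) :
        Set (Lp ℂ 2 (sphMeasure d))) :=
      MeasureTheory.Lp.boundedContinuousFunction_dense ℂ (sphMeasure d) (by norm_num)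
    exact h1.mono Submodule.subset_span
  have hzero : innerSL ℂ H = (0 : Lp ℂ 2 (sphMeasure d) →L[ℂ] ℂ) :=
    ContinuousLinearMap.ext_on hdense key
  have hHH : (inner ℂ H H : ℂ) = 0 := by
    have := congrFun (congrArg (fun T : Lp ℂ 2 (sphMeasure d) →L[ℂ] ℂ => (T : Lp ℂ 2 (sphMeasure d) → ℂ)) hzero) H
    simpa [innerSL_apply_apply] using this
  have hH0 : H = 0 := inner_self_eq_zero.mp hHH
  have : hh.toLp h = (MemLp.zero : MemLp (0 : Sph d → ℂ) 2 (sphMeasure d)).toLp 0 := by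
    rw [MemLp.toLp_zero]
    exact hH0
  exact (MemLp.toLp_eq_toLp_iff hh MemLp.zero).mp this

end Aux2

noncomputable section Aux3

variable {d : ℕ}

lemma extOp_eq_zero_everywhere {g : Sph d → ℂ} (hint : Integrable g (sphMeasure d))
    {x₀ : Eucl d} {ε : ℝ} (hε : 0 < ε)
    (hzero : ∀ x ∈ ball x₀ ε, extOp d g x = 0) : ∀ y, extOp d g y = 0 := by
  intro y
  by_cases hy : y = x₀
  · exact hy ▸ hzero x₀ (mem_ball_self hε)
  set v : Eucl d := y - x₀ with hvdef
  have hv : v ≠ 0 := sub_ne_zero.mpr hy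
  have hvpos : 0 < ‖v‖ := norm_pos_iff.mpr hv
  set a : Sph d → ℝ := fun ω => (inner ℝ x₀ (ω : Eucl d) : ℝ) with hadef
  set b : Sph d → ℝ := fun ω => (inner ℝ v (ω : Eucl d) : ℝ) with hbdef
  have ha : ∀ ω, |a ω| ≤ ‖x₀‖ := by
    intro ω
    calc |a ω| ≤ ‖x₀‖ * ‖(ω : Eucl d)‖ := abs_real_inner_le_norm _ _
      _ = ‖x₀‖ := by rw [norm_coe_sphere, mul_one]
  have hb : ∀ ω, |b ω| ≤ ‖v‖ := by
    intro ω
    calc |b ω| ≤ ‖v‖ * ‖(ω : Eucl d)‖ := abs_real_inner_le_norm _ _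
      _ = ‖v‖ := by rw [norm_coe_sphere, mul_one]
  have hacont : Continuous a := continuous_const.inner continuous_subtype_val
  have hbcont : Continuous b := continuous_const.inner continuous_subtype_val
  set F : ℂ → ℂ := fun z =>
    ∫ ω, g ω * Complex.exp (-(Complex.I * (((a ω : ℝ) : ℂ) + z * ((b ω : ℝ) : ℂ))))
      ∂(sphMeasure d) with hFdef
  -- norm of the exponential factor
  have hexp : ∀ (z : ℂ) (ω : Sph d),
      ‖Complex.exp (-(Complex.I * (((a ω : ℝ) : ℂ) + z * ((b ω : ℝ) : ℂ))))‖
        ≤ Real.exp (‖x₀‖ + ‖z‖ * ‖v‖) := by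
    intro z ω
    rw [Complex.norm_exp]
    refine Real.exp_le_exp.mpr ?_
    calc (-(Complex.I * (((a ω : ℝ) : ℂ) + z * ((b ω : ℝ) : ℂ)))).re
        ≤ ‖(-(Complex.I * (((a ω : ℝ) : ℂ) + z * ((b ω : ℝ) : ℂ))))‖ :=
          Complex.re_le_norm _
      _ = ‖(((a ω : ℝ) : ℂ) + z * ((b ω : ℝ) : ℂ))‖ := by
          rw [norm_neg, norm_mul, Complex.norm_I, one_mul]
      _ ≤ ‖((a ω : ℝ) : ℂ)‖ + ‖(z * ((b ω : ℝ) : ℂ))‖ :=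
          norm_add_le _ _
      _ = |a ω| + ‖z‖ * |b ω| := by
          rw [norm_mul, Complex.norm_real, Complex.norm_real, Real.norm_eq_abs, Real.norm_eq_abs]
      _ ≤ ‖x₀‖ + ‖z‖ * ‖v‖ :=
          add_le_add (ha ω) (mul_le_mul_of_nonneg_left (hb ω) (norm_nonneg z))
  -- measurability of the integrands
  have hmeas : ∀ z : ℂ, AEStronglyMeasurable
      (fun ω => g ω * Complex.exp (-(Complex.I * (((a ω : ℝ) : ℂ) + z * ((b ω : ℝ) : ℂ)))))
      (sphMeasure d) := by
    intro z
    refine hint.1.mul (Continuous.aestronglyMeasurable ?_)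
    exact Complex.continuous_exp.comp
      ((continuous_const.mul ((Complex.continuous_ofReal.comp hacont).add
        (continuous_const.mul (Complex.continuous_ofReal.comp hbcont)))).neg)
  have hintz : ∀ z : ℂ, Integrable
      (fun ω => g ω * Complex.exp (-(Complex.I * (((a ω : ℝ) : ℂ) + z * ((b ω : ℝ) : ℂ)))))
      (sphMeasure d) := by
    intro z
    refine Integrable.mono' (hint.norm.mul_const (Real.exp (‖x₀‖ + ‖z‖ * ‖v‖))) (hmeas z) ?_
    filter_upwards with ω
    rw [norm_mul]
    exact mul_le_mul_of_nonneg_left (hexp z ω) (norm_nonneg _)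
  -- differentiability
  have hF_diff : Differentiable ℂ F := by
    intro z₀
    set F' : ℂ → Sph d → ℂ := fun z ω =>
      g ω * (-(Complex.I * ((b ω : ℝ) : ℂ))) *
        Complex.exp (-(Complex.I * (((a ω : ℝ) : ℂ) + z * ((b ω : ℝ) : ℂ)))) with hF'def
    set B : Sph d → ℝ := fun ω =>
      ‖g ω‖ * (‖v‖ * Real.exp (‖x₀‖ + (‖z₀‖ + 1) * ‖v‖)) with hBdef
    have hBint : Integrable B (sphMeasure d) := hint.norm.mul_const _
    have hF'meas : AEStronglyMeasurable (F' z₀) (sphMeasure d) := by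
      refine (hint.1.mul (Continuous.aestronglyMeasurable ?_)).mul
        (Continuous.aestronglyMeasurable ?_)
      · exact ((continuous_const.mul (Complex.continuous_ofReal.comp hbcont)).neg)
      · exact Complex.continuous_exp.comp
          ((continuous_const.mul ((Complex.continuous_ofReal.comp hacont).add
            (continuous_const.mul (Complex.continuous_ofReal.comp hbcont)))).neg)
    have hbound : ∀ᵐ ω ∂(sphMeasure d), ∀ x ∈ Metric.ball z₀ 1, ‖F' x ω‖ ≤ B ω := by
      filter_upwards with ω
      intro x hx
      have hxnorm : ‖x‖ ≤ ‖z₀‖ + 1 := by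
        have := mem_ball_iff_norm.mp hx
        calc ‖x‖ = ‖z₀ + (x - z₀)‖ := by ring_nf
          _ ≤ ‖z₀‖ + ‖x - z₀‖ := norm_add_le _ _
          _ ≤ ‖z₀‖ + 1 := by linarith
      rw [hF'def]
      simp only
      rw [norm_mul, norm_mul]
      have h1 : ‖-(Complex.I * ((b ω : ℝ) : ℂ))‖ ≤ ‖v‖ := by
        rw [norm_neg, norm_mul, Complex.norm_I,
          one_mul, Complex.norm_real, Real.norm_eq_abs]
        exact hb ω
      have h2 : ‖Complex.exp (-(Complex.I * (((a ω : ℝ) : ℂ) + x * ((b ω : ℝ) : ℂ))))‖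
          ≤ Real.exp (‖x₀‖ + (‖z₀‖ + 1) * ‖v‖) := by
        refine le_trans (hexp x ω) (Real.exp_le_exp.mpr ?_)
        have : ‖x‖ * ‖v‖ ≤ (‖z₀‖ + 1) * ‖v‖ :=
          mul_le_mul_of_nonneg_right hxnorm (norm_nonneg v)
        linarith
      calc ‖g ω‖ * ‖-(Complex.I * ((b ω : ℝ) : ℂ))‖ *
            ‖Complex.exp (-(Complex.I * (((a ω : ℝ) : ℂ) + x * ((b ω : ℝ) : ℂ))))‖
          ≤ ‖g ω‖ * ‖v‖ * Real.exp (‖x₀‖ + (‖z₀‖ + 1) * ‖v‖) := by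
            have hgnn : (0:ℝ) ≤ ‖g ω‖ := norm_nonneg _
            have hexpnn : (0:ℝ) ≤
                ‖Complex.exp (-(Complex.I * (((a ω : ℝ) : ℂ) + x * ((b ω : ℝ) : ℂ))))‖ :=
              norm_nonneg _
            have := mul_le_mul (mul_le_mul_of_nonneg_left h1 hgnn) h2 hexpnn
              (by positivity)
            exact this
        _ = B ω := by rw [hBdef]; ring
    have hderiv : ∀ᵐ ω ∂(sphMeasure d), ∀ x ∈ Metric.ball z₀ 1,
        HasDerivAt (fun z => g ω *
          Complex.exp (-(Complex.I * (((a ω : ℝ) : ℂ) + z * ((b ω : ℝ) : ℂ))))) (F' x ω) x := by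
      filter_upwards with ω
      intro x _
      have h1 : HasDerivAt (fun z : ℂ => -(Complex.I * (((a ω : ℝ) : ℂ) + z * ((b ω : ℝ) : ℂ))))
          (-(Complex.I * ((b ω : ℝ) : ℂ))) x := by
        have h2 : HasDerivAt (fun z : ℂ => ((a ω : ℝ) : ℂ) + z * ((b ω : ℝ) : ℂ))
            ((b ω : ℝ) : ℂ) x := by
          simpa using ((hasDerivAt_id x).mul_const (((b ω : ℝ)) : ℂ)).const_add ((a ω : ℝ) : ℂ)
        exact (h2.const_mul Complex.I).neg
      have h3 := (h1.cexp).const_mul (g ω)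
      have e : F' x ω = g ω * (Complex.exp (-(Complex.I * (((a ω : ℝ) : ℂ) + x * ((b ω : ℝ) : ℂ))))
          * -(Complex.I * ((b ω : ℝ) : ℂ))) := by
        rw [hF'def]
        ring
      rw [e]
      exact h3
    have := hasDerivAt_integral_of_dominated_loc_of_deriv_le (Metric.ball_mem_nhds z₀ one_pos)
      (Filter.Eventually.of_forall fun z => hmeas z) (hintz z₀) hF'meas hbound hBint hderiv
    exact this.2.differentiableAt
  -- F on the reals is extOp g along the line
  have hFt : ∀ t : ℝ, F (t : ℂ) = extOp d g (x₀ + t • v) := by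
    intro t
    rw [hFdef, extOp]
    refine integral_congr_ae (Filter.Eventually.of_forall fun ω => ?_)
    simp only
    congr 2
    have h1 : (inner ℝ (x₀ + t • v) (ω : Eucl d) : ℝ) = a ω + t * b ω := by
      rw [inner_add_left, real_inner_smul_left]
    rw [h1]
    push_cast
    ring
  -- frequently zero near 0
  have hfreq : ∃ᶠ z in nhdsWithin (0 : ℂ) {(0 : ℂ)}ᶜ, F z = 0 := by
    rw [Filter.frequently_iff]
    intro U hU
    obtain ⟨r, hr, hrsub⟩ := Metric.mem_nhdsWithin_iff.mp hU
    set t : ℝ := min (r / 2) (ε / (2 * ‖v‖)) with htdef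
    have ht0 : 0 < t := lt_min (by linarith) (by positivity)
    refine ⟨(t : ℂ), hrsub ⟨?_, ?_⟩, ?_⟩
    · rw [mem_ball_iff_norm, sub_zero, Complex.norm_real, Real.norm_eq_abs,
        abs_of_pos ht0]
      calc t ≤ r / 2 := min_le_left _ _
        _ < r := by linarith
    · simp only [Set.mem_compl_iff, Set.mem_singleton_iff]
      exact Complex.ofReal_ne_zero.mpr ht0.ne'
    · rw [hFt t]
      refine hzero _ ?_
      rw [mem_ball_iff_norm]
      have : x₀ + t • v - x₀ = t • v := by abel
      rw [this, norm_smul, Real.norm_eq_abs, abs_of_pos ht0]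
      calc t * ‖v‖ ≤ (ε / (2 * ‖v‖)) * ‖v‖ :=
            mul_le_mul_of_nonneg_right (min_le_right _ _) (norm_nonneg v)
        _ = ε / 2 := by field_simp
        _ < ε := by linarith
  -- identity theorem
  have hzeroF := AnalyticOnNhd.eqOn_zero_of_preconnected_of_frequently_eq_zero
    (analyticOnNhd_univ_iff_differentiable.mpr hF_diff) isPreconnected_univ
    (Set.mem_univ (0 : ℂ)) hfreq
  have hF1 : F 1 = 0 := hzeroF (Set.mem_univ 1)
  have := hFt 1
  rw [Complex.ofReal_one, hF1] at this
  rw [hvdef] at this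
  simp only [one_smul] at this
  rw [show x₀ + (y - x₀) = y by abel] at this
  exact this.symm

end Aux3

/-- If `f ∈ L²(𝕊^{d-1})` is nonzero and
`∫_{ℝ^d} |\widehat{fσ}|^{q-2} |\widehat{gσ}|² dz = 0` for some `g ∈ L²(𝕊^{d-1})`,
then `g = 0` a.e.: the quadratic form associated to `T_f` is positive definite. -/
theorem quadratic_form_positive_definite (d : ℕ) (hd : 2 ≤ d) (q : ℝ) (hq : 2 < q)
    (f g : Sph d → ℂ) (hf2 : MemLp f 2 (sphMeasure d)) (hg2 : MemLp g 2 (sphMeasure d))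
    (hf0 : ¬ f =ᵐ[sphMeasure d] 0)
    (h : ∫⁻ z, ENNReal.ofReal (‖extOp d f z‖ ^ (q - 2) * ‖extOp d g z‖ ^ (2 : ℕ))
        ∂(volume : Measure (EuclideanSpace ℝ (Fin d))) = 0) :
    g =ᵐ[sphMeasure d] 0 := by
  have hfi : Integrable f (sphMeasure d) := integrable_of_memL2 hf2
  have hgi : Integrable g (sphMeasure d) := integrable_of_memL2 hg2
  have hcf : Continuous (extOp d f) := continuous_extOp hfi
  have hcg : Continuous (extOp d g) := continuous_extOp hgi
  -- measurability of the integrand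
  have hmeas : Measurable fun z : EuclideanSpace ℝ (Fin d) =>
      ENNReal.ofReal (‖extOp d f z‖ ^ (q - 2) * ‖extOp d g z‖ ^ (2 : ℕ)) := by
    refine ENNReal.measurable_ofReal.comp (Measurable.mul ?_ ?_)
    · exact ((Real.continuous_rpow_const (by linarith)).comp hcf.norm).measurable
    · exact (hcg.norm.pow 2).measurable
  -- a.e. vanishing of one of the factors
  have hae : ∀ᵐ z ∂(volume : Measure (EuclideanSpace ℝ (Fin d))),
      extOp d f z = 0 ∨ extOp d g z = 0 := by
    have h0 := (lintegral_eq_zero_iff hmeas).mp h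
    filter_upwards [h0] with z hz
    simp only [Pi.zero_apply, ENNReal.ofReal_eq_zero] at hz
    have h1 : 0 ≤ ‖extOp d f z‖ ^ (q - 2) := Real.rpow_nonneg (norm_nonneg _) _
    have h2 : 0 ≤ ‖extOp d g z‖ ^ (2 : ℕ) := pow_nonneg (norm_nonneg _) _
    have hmul : ‖extOp d f z‖ ^ (q - 2) * ‖extOp d g z‖ ^ (2 : ℕ) = 0 :=
      le_antisymm hz (mul_nonneg h1 h2)
    rcases mul_eq_zero.mp hmul with h' | h'
    · left
      have := (Real.rpow_eq_zero_iff_of_nonneg (norm_nonneg _)).mp h'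
      exact norm_eq_zero.mp this.1
    · right
      have : ‖extOp d g z‖ = 0 := by
        have h2ne : (2 : ℕ) ≠ 0 := two_ne_zero
        exact pow_eq_zero_iff h2ne |>.mp h'
      exact norm_eq_zero.mp this
  -- extOp f is not identically zero
  have hfex : ∃ x, extOp d f x ≠ 0 := by
    by_contra hcon
    push_neg at hcon
    exact hf0 (extOp_zero_ae hf2 hcon)
  obtain ⟨x₀, hx₀⟩ := hfex
  have hU : IsOpen {x : EuclideanSpace ℝ (Fin d) | extOp d f x ≠ 0} :=
    isOpen_ne_fun hcf continuous_const
  have hVopen : IsOpen {z : EuclideanSpace ℝ (Fin d) | extOp d f z ≠ 0 ∧ extOp d g z ≠ 0} :=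
    hU.inter (isOpen_ne_fun hcg continuous_const)
  have hVnull : (volume : Measure (EuclideanSpace ℝ (Fin d)))
      {z | extOp d f z ≠ 0 ∧ extOp d g z ≠ 0} = 0 := by
    refine measure_mono_null ?_ (ae_iff.mp hae)
    intro z hz
    simp only [Set.mem_setOf_eq] at hz ⊢
    exact fun hc => hc.elim hz.1 hz.2
  have hVempty : {z : EuclideanSpace ℝ (Fin d) | extOp d f z ≠ 0 ∧ extOp d g z ≠ 0} = ∅ := by
    by_contra hne
    have hpos := IsOpen.measure_pos volume hVopen (Set.nonempty_iff_ne_empty.mpr hne)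
    exact hpos.ne' hVnull
  obtain ⟨ε, hε, hball⟩ := Metric.isOpen_iff.mp hU x₀ hx₀
  have hzero : ∀ x ∈ ball x₀ ε, extOp d g x = 0 := by
    intro x hx
    by_contra hgz
    have hmem : x ∈ {z : EuclideanSpace ℝ (Fin d) | extOp d f z ≠ 0 ∧ extOp d g z ≠ 0} :=
      ⟨hball hx, hgz⟩
    rw [hVempty] at hmem
    exact hmem
  exact extOp_zero_ae hg2 (extOp_eq_zero_everywhere hgi hε hzero)
end

section
/- Let α, β be real numbers with α > β − 1 > 0. Then the following two-sided estimate holds: (1/2) · 6^{(α−β+1)/2} · Γ((α−β+1)/2) Γ(α+1) / Γ((α−β+1)/2 + α + 1) ≤ ∫_0^∞ |sin r|^α r^{−β} dr ≤ (1/2) · (6/α)^{(α−β+1)/2} · Γ((α−β+1)/2) · Σ_{k=1}^∞ k^{−β}, where the series Σ_{k=1}^∞ k^{−β} converges since β > 1. -/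
open Real MeasureTheory Set Filter

lemma aux_sin_ge {x : ℝ} (hx : 0 ≤ x) : x - x ^ 3 / 6 ≤ Real.sin x := by
  have key : ∀ y ∈ Set.Ici (0:ℝ), HasDerivAt (fun t => Real.sin t - t + t ^ 3 / 6)
      (Real.cos y - 1 + y ^ 2 / 2) y := by
    intro y _
    have h1 : HasDerivAt (fun t : ℝ => t ^ 3 / 6) (3 * y ^ 2 / 6) y := by
      simpa using ((hasDerivAt_pow 3 y).div_const 6)
    have := ((Real.hasDerivAt_sin y).sub (hasDerivAt_id y)).add h1
    exact this.congr_deriv (by ring)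
  have mono : MonotoneOn (fun t => Real.sin t - t + t ^ 3 / 6) (Set.Ici (0:ℝ)) := by
    apply monotoneOn_of_deriv_nonneg (convex_Ici 0)
    · exact Continuous.continuousOn (by continuity)
    · intro y hy
      rw [interior_Ici] at hy
      exact (key y (Set.mem_Ici.mpr (le_of_lt hy))).differentiableAt.differentiableWithinAt
    · intro y hy
      rw [interior_Ici] at hy
      rw [HasDerivAt.deriv (key y (Set.mem_Ici.mpr (le_of_lt hy)))]
      nlinarith [Real.one_sub_sq_div_two_le_cos (x := y)]
  have := mono (Set.self_mem_Ici) hx hx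
  simp only [Real.sin_zero] at this
  nlinarith [this]


lemma aux_sin_le {s : ℝ} (h0 : 0 ≤ s) (hπ : s ≤ π) : Real.sin s ≤ s * Real.exp (-s ^ 2 / 6) := by
  rcases eq_or_lt_of_le h0 with rfl | h0'
  · norm_num
  rcases eq_or_lt_of_le hπ with rfl | hπ'
  · rw [Real.sin_pi]; positivity
  set x : ℝ := s / π with hxdef
  have hπpos := Real.pi_pos
  have hx0 : 0 < x := div_pos h0' hπpos
  have hx1 : x < 1 := (div_lt_one hπpos).mpr hπ'
  have hs : π * x = s := by rw [hxdef, mul_comm, div_mul_cancel₀ _ hπpos.ne']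
  -- partial sums of Basel series
  have hbasel : Filter.Tendsto (fun n : ℕ => ∑ j ∈ Finset.range n, (1:ℝ) / ((j:ℝ) + 1) ^ 2)
      Filter.atTop (nhds (π ^ 2 / 6)) := by
    have h := hasSum_zeta_two.tendsto_sum_nat
    have h2 := h.comp (Filter.tendsto_add_atTop_nat 1)
    convert h2 using 2 with n
    rw [Function.comp_apply, Finset.sum_range_succ']
    simp
  have hQ : Filter.Tendsto (fun n : ℕ => π * x *
      Real.exp (-(x ^ 2) * ∑ j ∈ Finset.range n, (1:ℝ) / ((j:ℝ) + 1) ^ 2))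
      Filter.atTop (nhds (π * x * Real.exp (-(x ^ 2) * (π ^ 2 / 6)))) := by
    exact (((Real.continuous_exp.tendsto _).comp (hbasel.const_mul (-(x^2)))).const_mul (π * x))
  have hP := Real.tendsto_euler_sin_prod x
  have hle : ∀ n : ℕ, π * x * ∏ j ∈ Finset.range n, ((1:ℝ) - x ^ 2 / ((j:ℝ) + 1) ^ 2) ≤
      π * x * Real.exp (-(x ^ 2) * ∑ j ∈ Finset.range n, (1:ℝ) / ((j:ℝ) + 1) ^ 2) := by
    intro n
    have hprod : ∏ j ∈ Finset.range n, ((1:ℝ) - x ^ 2 / ((j:ℝ) + 1) ^ 2) ≤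
        ∏ j ∈ Finset.range n, Real.exp (-(x ^ 2 / ((j:ℝ) + 1) ^ 2)) := by
      apply Finset.prod_le_prod
      · intro j _
        have hj1 : (1:ℝ) ≤ ((j:ℝ) + 1) ^ 2 := by nlinarith [Nat.cast_nonneg (α := ℝ) j]
        have : x ^ 2 / ((j:ℝ)+1) ^ 2 ≤ x ^ 2 := by
          apply div_le_self (by positivity) hj1
        nlinarith
      · intro j _
        have := Real.add_one_le_exp (-(x ^ 2 / ((j:ℝ) + 1) ^ 2))
        linarith
    rw [← Real.exp_sum] at hprod
    have : ∑ j ∈ Finset.range n, -(x ^ 2 / ((j:ℝ) + 1) ^ 2) =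
        -(x ^ 2) * ∑ j ∈ Finset.range n, (1:ℝ) / ((j:ℝ) + 1) ^ 2 := by
      rw [Finset.mul_sum]
      congr 1 with j
      field_simp
    rw [this] at hprod
    have hπx : 0 ≤ π * x := by positivity
    exact mul_le_mul_of_nonneg_left hprod hπx
  have := le_of_tendsto_of_tendsto' hP hQ hle
  rw [hs] at this
  refine this.trans (le_of_eq ?_)
  congr 1
  rw [← hs]
  ring


lemma aux_beta {a b : ℝ} (ha : 0 < a) (hb : 0 < b) :
    ∫ t in Set.Ioo (0:ℝ) 1, t ^ (a - 1) * (1 - t) ^ (b - 1) =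
      Real.Gamma a * Real.Gamma b / Real.Gamma (a + b) := by
  have hab : 0 < a + b := by linarith
  have hΓ : (0:ℝ) < Real.Gamma (a + b) := Real.Gamma_pos_of_pos hab
  have key := Complex.Gamma_mul_Gamma_eq_betaIntegral
    (s := (a:ℂ)) (t := (b:ℂ)) (by simpa using ha) (by simpa using hb)
  have hsum : ((a:ℂ) + b) = ((a + b : ℝ) : ℂ) := by push_cast; ring
  have hΓc : Complex.Gamma ((a:ℂ) + b) ≠ 0 := by
    rw [hsum, Complex.Gamma_ofReal]
    exact_mod_cast hΓ.ne'
  have hbeta : Complex.betaIntegral (a:ℂ) (b:ℂ) =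
      ((∫ t in (0:ℝ)..1, t ^ (a - 1) * (1 - t) ^ (b - 1) : ℝ) : ℂ) := by
    rw [Complex.betaIntegral, ← intervalIntegral.integral_ofReal]
    refine intervalIntegral.integral_congr_ae ?_
    filter_upwards [] with t
    intro ht
    rw [Set.uIoc_of_le (by norm_num : (0:ℝ) ≤ 1)] at ht
    rw [Complex.ofReal_mul, Complex.ofReal_cpow ht.1.le,
      Complex.ofReal_cpow (by linarith [ht.2] : (0:ℝ) ≤ 1 - t)]
    push_cast
    ring
  have hval : Complex.betaIntegral (a:ℂ) (b:ℂ) =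
      ((Real.Gamma a * Real.Gamma b / Real.Gamma (a + b) : ℝ) : ℂ) := by
    have h1 : Complex.betaIntegral (a:ℂ) (b:ℂ) =
        Complex.Gamma a * Complex.Gamma b / Complex.Gamma ((a:ℂ) + b) :=
      (eq_div_iff hΓc).mpr (by rw [key]; ring)
    rw [h1, hsum, Complex.Gamma_ofReal, Complex.Gamma_ofReal, Complex.Gamma_ofReal]
    push_cast
    ring
  rw [intervalIntegral.integral_of_le (by norm_num : (0:ℝ) ≤ 1),
    MeasureTheory.integral_Ioc_eq_integral_Ioo] at hbeta
  rw [hbeta] at hval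
  exact_mod_cast hval


lemma aux_meas (α β : ℝ) : Measurable (fun r : ℝ => |Real.sin r| ^ α / r ^ β) := by
  fun_prop

lemma aux_integrable {α β : ℝ} (hβ : 1 < β) (hα : β - 1 < α) :
    IntegrableOn (fun r : ℝ => |Real.sin r| ^ α / r ^ β) (Set.Ioi 0) := by
  have hα0 : 0 < α := by linarith
  have h1 : IntegrableOn (fun r : ℝ => |Real.sin r| ^ α / r ^ β) (Set.Ioc 0 1) := by
    have hbd : IntegrableOn (fun r : ℝ => r ^ (α - β)) (Set.Ioc 0 1) := by
      have := intervalIntegral.intervalIntegrable_rpow' (r := α - β) (by linarith) (a := 0) (b := 1)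
      rwa [intervalIntegrable_iff_integrableOn_Ioc_of_le (by norm_num)] at this
    refine Integrable.mono hbd ((aux_meas α β).aestronglyMeasurable) ?_
    rw [MeasureTheory.ae_restrict_iff' measurableSet_Ioc]
    filter_upwards [] with r hr
    have hr0 : 0 < r := hr.1
    have hsin : |Real.sin r| ≤ r := (Real.abs_sin_le_abs).trans_eq (abs_of_pos hr0)
    have e1 : ‖|Real.sin r| ^ α / r ^ β‖ = |Real.sin r| ^ α / r ^ β := by
      rw [Real.norm_eq_abs]; exact abs_of_nonneg (by positivity)
    have e2 : ‖r ^ (α - β)‖ = r ^ (α - β) := by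
      rw [Real.norm_eq_abs]; exact abs_of_nonneg (Real.rpow_nonneg hr0.le _)
    rw [e1, e2, Real.rpow_sub hr0, div_le_div_iff_of_pos_right (Real.rpow_pos_of_pos hr0 β)]
    exact Real.rpow_le_rpow (abs_nonneg _) hsin hα0.le
  have h2 : IntegrableOn (fun r : ℝ => |Real.sin r| ^ α / r ^ β) (Set.Ioi 1) := by
    have hbd : IntegrableOn (fun r : ℝ => r ^ (-β)) (Set.Ioi (1:ℝ)) :=
      integrableOn_Ioi_rpow_of_lt (by linarith) one_pos
    refine Integrable.mono hbd ((aux_meas α β).aestronglyMeasurable) ?_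
    rw [MeasureTheory.ae_restrict_iff' measurableSet_Ioi]
    filter_upwards [] with r hr
    have hr0 : (0:ℝ) < r := lt_trans one_pos hr
    have e1 : ‖|Real.sin r| ^ α / r ^ β‖ = |Real.sin r| ^ α / r ^ β := by
      rw [Real.norm_eq_abs]; exact abs_of_nonneg (by positivity)
    have e2 : ‖r ^ (-β)‖ = r ^ (-β) := by
      rw [Real.norm_eq_abs]; exact abs_of_nonneg (Real.rpow_nonneg hr0.le _)
    rw [e1, e2, Real.rpow_neg hr0.le, div_eq_mul_inv]
    have hs1 : |Real.sin r| ^ α ≤ 1 :=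
      Real.rpow_le_one (abs_nonneg _) (abs_sin_le_one r) hα0.le
    nlinarith [inv_pos.mpr (Real.rpow_pos_of_pos hr0 β)]
  have := h1.union h2
  rwa [Set.Ioc_union_Ioi_eq_Ioi (by norm_num : (0:ℝ) ≤ 1)] at this


-- change of variables: value of ∫_{(0,√6)} r^(α-β) (1 - r²/6)^α dr
lemma aux_lower_value {α β : ℝ} (hβ : 1 < β) (hα : β - 1 < α) :
    ∫ r in Set.Ioo (0:ℝ) (Real.sqrt 6), r ^ (α - β) * (1 - r ^ 2 / 6) ^ α =
      (1 / 2) * 6 ^ ((α - β + 1) / 2) *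
        (Real.Gamma ((α - β + 1) / 2) * Real.Gamma (α + 1) /
          Real.Gamma ((α - β + 1) / 2 + α + 1)) := by
  set c : ℝ := (α - β + 1) / 2 with hc
  have hc0 : 0 < c := by rw [hc]; linarith
  have hα0 : 0 < α := by linarith
  set φ : ℝ → ℝ := fun t => Real.sqrt (6 * t) with hφ
  have himg : φ '' Set.Ioo 0 1 = Set.Ioo (0:ℝ) (Real.sqrt 6) := by
    ext r
    constructor
    · rintro ⟨t, ht, rfl⟩
      exact ⟨Real.sqrt_pos.mpr (by nlinarith [ht.1]),
        by rw [show (6:ℝ) = 6*1 by ring]; exact Real.sqrt_lt_sqrt (by nlinarith [ht.1]) (by nlinarith [ht.2])⟩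
    · rintro ⟨hr0, hr6⟩
      refine ⟨r ^ 2 / 6, ⟨by positivity, ?_⟩, ?_⟩
      · have : r ^ 2 < 6 := by
          have := (Real.lt_sqrt hr0.le).mp hr6
          linarith
        linarith
      · rw [hφ]
        simp only []
        rw [show 6 * (r ^ 2 / 6) = r ^ 2 by ring, Real.sqrt_sq hr0.le]
  have hderiv : ∀ t ∈ Set.Ioo (0:ℝ) 1, HasDerivWithinAt φ (3 / Real.sqrt (6 * t)) (Set.Ioo 0 1) t := by
    intro t ht
    have h6t : (6:ℝ) * t ≠ 0 := by nlinarith [ht.1]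
    have h := (Real.hasDerivAt_sqrt h6t).comp t ((hasDerivAt_id t).const_mul 6)
    have : HasDerivAt φ (3 / Real.sqrt (6 * t)) t := by
      refine h.congr_deriv ?_
      field_simp
      ring
    exact this.hasDerivWithinAt
  have hinj : Set.InjOn φ (Set.Ioo 0 1) := by
    intro a ha b hb hab
    have := (Real.sqrt_inj (by nlinarith [ha.1]) (by nlinarith [hb.1])).mp hab
    linarith
  have hcov := integral_image_eq_integral_abs_deriv_smul measurableSet_Ioo hderiv hinj
    (fun r => r ^ (α - β) * (1 - r ^ 2 / 6) ^ α)
  rw [himg] at hcov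
  rw [hcov]
  have hcongr : ∀ t ∈ Set.Ioo (0:ℝ) 1,
      |3 / Real.sqrt (6 * t)| • ((Real.sqrt (6 * t)) ^ (α - β) * (1 - (Real.sqrt (6 * t)) ^ 2 / 6) ^ α)
        = (1 / 2) * 6 ^ c * (t ^ (c - 1) * (1 - t) ^ ((α + 1) - 1)) := by
    intro t ht
    have ht0 : 0 < t := ht.1
    have h6t : (0:ℝ) < 6 * t := by nlinarith
    have hsq : (Real.sqrt (6 * t)) ^ 2 = 6 * t := Real.sq_sqrt h6t.le
    have hs6t : Real.sqrt (6 * t) = (6 * t) ^ ((1:ℝ)/2) := Real.sqrt_eq_rpow (6*t)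
    rw [smul_eq_mul, abs_of_pos (by positivity), hsq, hs6t,
      show (1 - 6 * t / 6) = 1 - t by ring]
    have hcomb : (6*t) ^ (-((1:ℝ)/2)) * (6*t) ^ ((1:ℝ)/2*(α-β)) = (6*t) ^ (c-1) := by
      rw [← Real.rpow_add h6t]; congr 1; rw [hc]; ring
    calc 3 / (6*t) ^ ((1:ℝ)/2) * (((6*t) ^ ((1:ℝ)/2)) ^ (α-β) * (1-t) ^ α)
        = 3 * ((6*t) ^ (-((1:ℝ)/2)) * (6*t) ^ ((1:ℝ)/2*(α-β))) * (1-t) ^ α := by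
          rw [← Real.rpow_mul h6t.le, div_eq_mul_inv, ← Real.rpow_neg h6t.le]; ring
      _ = 3 * (6*t) ^ (c-1) * (1-t) ^ α := by rw [hcomb]
      _ = 3 * (6 ^ (c-1) * t ^ (c-1)) * (1-t) ^ α := by
          rw [Real.mul_rpow (by norm_num) ht0.le]
      _ = 1 / 2 * 6 ^ c * (t ^ (c - 1) * (1 - t) ^ ((α + 1) - 1)) := by
          rw [show (6:ℝ) ^ (c-1) = 6 ^ c / 6 by rw [Real.rpow_sub (by norm_num), Real.rpow_one],
            show ((α:ℝ) + 1 - 1) = α by ring]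
          ring
  rw [MeasureTheory.setIntegral_congr_fun measurableSet_Ioo hcongr]
  rw [MeasureTheory.integral_const_mul]
  rw [aux_beta hc0 (by linarith : (0:ℝ) < α + 1)]
  rw [show c + (α + 1) = c + α + 1 by ring]

lemma aux_lower {α β : ℝ} (hβ : 1 < β) (hα : β - 1 < α) :
    (1 / 2) * 6 ^ ((α - β + 1) / 2) *
        (Real.Gamma ((α - β + 1) / 2) * Real.Gamma (α + 1) /
          Real.Gamma ((α - β + 1) / 2 + α + 1)) ≤
      ∫ r in Set.Ioi (0:ℝ), |Real.sin r| ^ α / r ^ β := by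
  have hα0 : 0 < α := by linarith
  have hf := aux_integrable hβ hα
  have hsub : Set.Ioo (0:ℝ) (Real.sqrt 6) ⊆ Set.Ioi 0 := fun x hx => hx.1
  have hg_le : ∀ r ∈ Set.Ioo (0:ℝ) (Real.sqrt 6),
      r ^ (α - β) * (1 - r ^ 2 / 6) ^ α ≤ |Real.sin r| ^ α / r ^ β := by
    intro r hr
    have hr0 : 0 < r := hr.1
    have hr6 : r ^ 2 < 6 := by
      have := (Real.lt_sqrt hr0.le).mp hr.2; linarith
    have hfac : 0 ≤ 1 - r ^ 2 / 6 := by linarith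
    have hbase : 0 ≤ r * (1 - r ^ 2 / 6) := by positivity
    have hsin : r * (1 - r ^ 2 / 6) ≤ |Real.sin r| := by
      have h1 : r * (1 - r ^ 2 / 6) = r - r ^ 3 / 6 := by ring
      rw [h1]
      exact (aux_sin_ge hr0.le).trans (le_abs_self _)
    have hpow : (r * (1 - r ^ 2 / 6)) ^ α ≤ |Real.sin r| ^ α :=
      Real.rpow_le_rpow hbase hsin hα0.le
    rw [Real.mul_rpow hr0.le hfac] at hpow
    rw [Real.rpow_sub hr0, div_mul_eq_mul_div]
    gcongr
  have hg_int : IntegrableOn (fun r : ℝ => r ^ (α - β) * (1 - r ^ 2 / 6) ^ α)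
      (Set.Ioo (0:ℝ) (Real.sqrt 6)) := by
    refine Integrable.mono (hf.mono_set hsub) ?_ ?_
    · apply Measurable.aestronglyMeasurable
      fun_prop
    · rw [MeasureTheory.ae_restrict_iff' measurableSet_Ioo]
      filter_upwards [] with r hr
      have hr0 : 0 < r := hr.1
      have hr6 : r ^ 2 < 6 := by
        have := (Real.lt_sqrt hr0.le).mp hr.2; linarith
      have hfac : 0 ≤ 1 - r ^ 2 / 6 := by linarith
      rw [Real.norm_eq_abs, Real.norm_eq_abs,
        abs_of_nonneg (by positivity : (0:ℝ) ≤ r ^ (α - β) * (1 - r ^ 2 / 6) ^ α),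
        abs_of_nonneg (by positivity : (0:ℝ) ≤ |Real.sin r| ^ α / r ^ β)]
      exact hg_le r hr
  calc (1 / 2) * 6 ^ ((α - β + 1) / 2) *
        (Real.Gamma ((α - β + 1) / 2) * Real.Gamma (α + 1) /
          Real.Gamma ((α - β + 1) / 2 + α + 1))
      = ∫ r in Set.Ioo (0:ℝ) (Real.sqrt 6), r ^ (α - β) * (1 - r ^ 2 / 6) ^ α :=
        (aux_lower_value hβ hα).symm
    _ ≤ ∫ r in Set.Ioo (0:ℝ) (Real.sqrt 6), |Real.sin r| ^ α / r ^ β :=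
        setIntegral_mono_on hg_int (hf.mono_set hsub) measurableSet_Ioo hg_le
    _ ≤ ∫ r in Set.Ioi (0:ℝ), |Real.sin r| ^ α / r ^ β := by
        refine setIntegral_mono_set hf ?_ (Filter.Eventually.of_forall hsub)
        filter_upwards [MeasureTheory.ae_restrict_mem measurableSet_Ioi] with r hr
        have hr0 : 0 < r := hr
        positivity

lemma aux_upper {α β : ℝ} (hβ : 1 < β) (hα : β - 1 < α) :
    (∫ r in Set.Ioi (0:ℝ), |Real.sin r| ^ α / r ^ β) ≤
      (1 / 2) * (6 / α) ^ ((α - β + 1) / 2) * Real.Gamma ((α - β + 1) / 2) *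
        ∑' k : ℕ, ((k : ℝ) + 1) ^ (-β) := by
  have hα0 : 0 < α := by linarith
  have hβ0 : 0 < β := by linarith
  have hf := aux_integrable hβ hα
  set c : ℝ := (α - β + 1) / 2 with hc
  set h : ℝ → ℝ := fun s => s ^ (α - β) * Real.exp (-(α/6) * s ^ 2) with hh
  have hb6 : (0:ℝ) < α / 6 := by linarith
  have hI_int : IntegrableOn h (Set.Ioi 0) :=
    integrableOn_rpow_mul_exp_neg_mul_sq hb6 (by linarith : (-1:ℝ) < α - β)
  set I : ℝ := ∫ s in Set.Ioi (0:ℝ), h s with hIdef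
  have hI_nonneg : 0 ≤ I := by
    rw [hIdef]
    apply MeasureTheory.setIntegral_nonneg measurableSet_Ioi
    intro s hs
    have : (0:ℝ) < s := hs
    positivity
  have hI_val : I = (1 / 2) * (6 / α) ^ c * Real.Gamma c := by
    have hval := integral_rpow_mul_exp_neg_mul_rpow (p := 2) (q := α - β) (b := α / 6)
      two_pos (by linarith) hb6
    have heq : ∫ x in Set.Ioi (0:ℝ), x ^ (α - β) * Real.exp (-(α/6) * x ^ (2:ℝ)) = I := by
      rw [hIdef]
      refine MeasureTheory.setIntegral_congr_fun measurableSet_Ioi (fun x hx => ?_)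
      rw [hh]
      norm_num
    rw [← heq, hval]
    rw [show -(α - β + 1) / 2 = -c by rw [hc]; ring]
    rw [Real.rpow_neg hb6.le, show (6:ℝ)/α = (α/6)⁻¹ by rw [inv_div], Real.inv_rpow hb6.le]
    ring
  -- covering of (0, ∞) by the intervals (kπ, (k+1)π]
  set S : ℕ → Set ℝ := fun k => Set.Ioc ((k:ℝ) * π) (((k:ℝ) + 1) * π) with hS
  have hπ := Real.pi_pos
  have hcover : Set.Ioi (0:ℝ) = ⋃ k : ℕ, S k := by
    ext r
    simp only [Set.mem_Ioi, Set.mem_iUnion, hS, Set.mem_Ioc]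
    constructor
    · intro hr
      have hrπ : 0 < r / π := div_pos hr hπ
      set n : ℕ := ⌈r / π⌉₊ with hn
      have hn1 : 1 ≤ n := Nat.one_le_iff_ne_zero.mpr (by
        simp only [hn, ne_eq, Nat.ceil_eq_zero, not_le]
        exact hrπ)
      refine ⟨n - 1, ?_, ?_⟩
      · have hlt : ((n - 1 : ℕ) : ℝ) < r / π := Nat.lt_ceil.mp (by omega)
        calc ((n-1:ℕ):ℝ) * π < (r / π) * π := by
              exact mul_lt_mul_of_pos_right hlt hπ
          _ = r := by field_simp
      · have hle : r / π ≤ (n : ℝ) := Nat.le_ceil _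
        have : ((n - 1 : ℕ) : ℝ) + 1 = (n : ℝ) := by
          rw [Nat.cast_sub hn1]; norm_num
        rw [this]
        calc r = (r / π) * π := by field_simp
          _ ≤ (n : ℝ) * π := mul_le_mul_of_nonneg_right hle hπ.le
    · rintro ⟨k, hk1, _⟩
      have : (0:ℝ) ≤ (k:ℝ) * π := by positivity
      linarith
  have hmeas : ∀ k : ℕ, MeasurableSet (S k) := fun k => measurableSet_Ioc
  have hdisj : Pairwise (Function.onFun Disjoint S) := by
    intro i j hij
    simp only [Function.onFun, hS]
    rw [Set.Ioc_disjoint_Ioc]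
    rcases hij.lt_or_gt with hlt | hlt
    · have : ((i:ℝ) + 1) ≤ (j:ℝ) := by exact_mod_cast hlt
      calc min (((i:ℝ)+1)*π) (((j:ℝ)+1)*π) ≤ ((i:ℝ)+1)*π := min_le_left _ _
        _ ≤ (j:ℝ)*π := mul_le_mul_of_nonneg_right this hπ.le
        _ ≤ max ((i:ℝ)*π) ((j:ℝ)*π) := le_max_right _ _
    · have : ((j:ℝ) + 1) ≤ (i:ℝ) := by exact_mod_cast hlt
      calc min (((i:ℝ)+1)*π) (((j:ℝ)+1)*π) ≤ ((j:ℝ)+1)*π := min_le_right _ _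
        _ ≤ (i:ℝ)*π := mul_le_mul_of_nonneg_right this hπ.le
        _ ≤ max ((i:ℝ)*π) ((j:ℝ)*π) := le_max_left _ _
  have hfU : IntegrableOn (fun r : ℝ => |Real.sin r| ^ α / r ^ β) (⋃ k, S k) := by
    rwa [← hcover]
  have hsum := MeasureTheory.hasSum_integral_iUnion hmeas hdisj hfU
  -- per-interval bound
  have hkey : ∀ k : ℕ, (∫ r in S k, |Real.sin r| ^ α / r ^ β) ≤ ((k:ℝ) + 1) ^ (-β) * I := by
    intro k
    have hkπ : (0:ℝ) ≤ (k:ℝ) * π := by positivity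
    have hlt : (k:ℝ) * π < ((k:ℝ) + 1) * π := by nlinarith
    have hSsub : S k ⊆ Set.Ioi (0:ℝ) := by
      intro r hr
      simp only [hS, Set.mem_Ioc] at hr
      exact lt_of_le_of_lt hkπ hr.1
    -- integrability of translated h on S k
    have hh_ii : IntervalIntegrable h volume 0 π := by
      rw [intervalIntegrable_iff_integrableOn_Ioc_of_le hπ.le]
      exact hI_int.mono_set Set.Ioc_subset_Ioi_self
    have hh_trans : IntervalIntegrable (fun r => h (r - (k:ℝ) * π)) volume ((k:ℝ)*π) (((k:ℝ)+1)*π) := by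
      have := hh_ii.comp_sub_right ((k:ℝ) * π)
      rw [zero_add] at this
      rwa [show π + (k:ℝ) * π = ((k:ℝ) + 1) * π by ring] at this
    have hh_transOn : IntegrableOn (fun r => h (r - (k:ℝ) * π)) (S k) := by
      rw [hS]
      rwa [intervalIntegrable_iff_integrableOn_Ioc_of_le hlt.le] at hh_trans
    -- pointwise bound on S k
    have hpt : ∀ r ∈ S k, |Real.sin r| ^ α / r ^ β ≤
        ((k:ℝ) + 1) ^ (-β) * h (r - (k:ℝ) * π) := by
      intro r hr
      simp only [hS, Set.mem_Ioc] at hr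
      set s : ℝ := r - (k:ℝ) * π with hsdef
      have hs0 : 0 < s := by simp only [hsdef]; linarith [hr.1]
      have hsπ : s ≤ π := by simp only [hsdef]; nlinarith [hr.2]
      have hr0 : 0 < r := lt_of_le_of_lt hkπ hr.1
      -- |sin r| = sin s
      have hsin_eq : |Real.sin r| = |Real.sin s| := by
        have : r = s + (k:ℝ) * π := by rw [hsdef]; ring
        rw [this, Real.sin_add_nat_mul_pi, abs_mul, abs_pow, abs_neg, abs_one, one_pow, one_mul]
      have hsin_nonneg : 0 ≤ Real.sin s := Real.sin_nonneg_of_nonneg_of_le_pi hs0.le hsπ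
      have hsin_le : |Real.sin s| ≤ s * Real.exp (-s ^ 2 / 6) := by
        rw [abs_of_nonneg hsin_nonneg]
        exact aux_sin_le hs0.le hsπ
      -- numerator bound
      have hnum : |Real.sin r| ^ α ≤ s ^ α * Real.exp (-(α/6) * s ^ 2) := by
        rw [hsin_eq]
        calc |Real.sin s| ^ α ≤ (s * Real.exp (-s ^ 2 / 6)) ^ α :=
              Real.rpow_le_rpow (abs_nonneg _) hsin_le hα0.le
          _ = s ^ α * Real.exp (-(α/6) * s ^ 2) := by
              rw [Real.mul_rpow hs0.le (Real.exp_pos _).le,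
                Real.rpow_def_of_pos (Real.exp_pos _), Real.log_exp]
              congr 2
              ring
      -- denominator bound
      have hden : (((k:ℝ) + 1) * s) ^ β ≤ r ^ β := by
        apply Real.rpow_le_rpow (by positivity) _ hβ0.le
        have : (k:ℝ) * s ≤ (k:ℝ) * π := mul_le_mul_of_nonneg_left hsπ (Nat.cast_nonneg k)
        calc ((k:ℝ) + 1) * s = (k:ℝ) * s + s := by ring
          _ ≤ (k:ℝ) * π + s := by linarith
          _ = r := by rw [hsdef]; ring
      calc |Real.sin r| ^ α / r ^ β
          ≤ (s ^ α * Real.exp (-(α/6) * s ^ 2)) / (((k:ℝ) + 1) * s) ^ β := by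
            apply div_le_div₀ (by positivity) hnum (Real.rpow_pos_of_pos (by positivity) β) hden
        _ = ((k:ℝ) + 1) ^ (-β) * h s := by
            rw [hh]
            simp only []
            rw [Real.mul_rpow (by positivity) hs0.le, Real.rpow_neg (by positivity),
              Real.rpow_sub hs0]
            field_simp
    calc (∫ r in S k, |Real.sin r| ^ α / r ^ β)
        ≤ ∫ r in S k, ((k:ℝ) + 1) ^ (-β) * h (r - (k:ℝ) * π) :=
          setIntegral_mono_on (hf.mono_set hSsub) (hh_transOn.const_mul _) (hmeas k) hpt
      _ = ((k:ℝ) + 1) ^ (-β) * ∫ r in S k, h (r - (k:ℝ) * π) := by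
          rw [MeasureTheory.integral_const_mul]
      _ = ((k:ℝ) + 1) ^ (-β) * ∫ s in Set.Ioc (0:ℝ) π, h s := by
          congr 1
          rw [hS]
          rw [← intervalIntegral.integral_of_le hlt.le,
            intervalIntegral.integral_comp_sub_right h ((k:ℝ) * π),
            show (k:ℝ)*π - (k:ℝ)*π = 0 by ring, show ((k:ℝ)+1)*π - (k:ℝ)*π = π by ring,
            intervalIntegral.integral_of_le hπ.le]
      _ ≤ ((k:ℝ) + 1) ^ (-β) * I := by
          apply mul_le_mul_of_nonneg_left _ (Real.rpow_nonneg (by positivity) _)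
          rw [hIdef]
          refine setIntegral_mono_set hI_int ?_
            (Filter.Eventually.of_forall Set.Ioc_subset_Ioi_self)
          filter_upwards [MeasureTheory.ae_restrict_mem measurableSet_Ioi] with s hs
          have : (0:ℝ) < s := hs
          rw [hh]
          positivity
  -- summability of the dominating series
  have hsummable : Summable (fun k : ℕ => ((k:ℝ) + 1) ^ (-β)) := by
    have h1 : Summable (fun n : ℕ => (n:ℝ) ^ (-β)) :=
      (Real.summable_nat_rpow (p := -β)).mpr (by linarith)
    have h2 := (summable_nat_add_iff 1).mpr h1
    refine h2.congr (fun n => ?_)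
    push_cast
    ring_nf
  -- conclude
  rw [hcover, ← hsum.tsum_eq]
  calc (∑' k : ℕ, ∫ r in S k, |Real.sin r| ^ α / r ^ β)
      ≤ ∑' k : ℕ, ((k:ℝ) + 1) ^ (-β) * I :=
        Summable.tsum_le_tsum hkey hsum.summable (hsummable.mul_right I)
    _ = (∑' k : ℕ, ((k:ℝ) + 1) ^ (-β)) * I := tsum_mul_right
    _ = (1 / 2) * (6 / α) ^ c * Real.Gamma c * ∑' k : ℕ, ((k:ℝ) + 1) ^ (-β) := by
        rw [hI_val]; ring


/-- Two-sided estimate for `∫_0^∞ |sin r|^α r^{-β} dr` when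
`α > β - 1 > 0`. -/
theorem sinc_integral_two_sided (α β : ℝ) (hβ : 1 < β) (hα : β - 1 < α) :
    (1 / 2) * 6 ^ ((α - β + 1) / 2) *
        (Real.Gamma ((α - β + 1) / 2) * Real.Gamma (α + 1) /
          Real.Gamma ((α - β + 1) / 2 + α + 1)) ≤
      (∫ r in Set.Ioi (0 : ℝ), |Real.sin r| ^ α / r ^ β) ∧
    (∫ r in Set.Ioi (0 : ℝ), |Real.sin r| ^ α / r ^ β) ≤
      (1 / 2) * (6 / α) ^ ((α - β + 1) / 2) * Real.Gamma ((α - β + 1) / 2) *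
        ∑' k : ℕ, ((k : ℝ) + 1) ^ (-β) := by
  exact ⟨aux_lower hβ hα, aux_upper hβ hα⟩
end
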